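/- Let F : C ⥤ D be a final functor. Let Φ, Ψ : D ⥤ E be functors, and assume that Ψ sends every morphism of D to an isomorphism of E. Then precomposition with F gives a bijection from the set of natural transformations Φ ⟶ Ψ to the set of natural transformations F ⋙ Φ ⟶ F ⋙ Ψ. -/

import Mathlib

open CategoryTheory

universe v₁ v₂ v₃ u₁ u₂ u₃

/-- If `F : C ⥤ D` is final and `Ψ : D ⥤ E` sends every morphism of `D` to an
isomorphism, then precomposition with `F` is a bijection from natural transformations
`Φ ⟶ Ψ` to natural transformations `F ⋙ Φ ⟶ F ⋙ Ψ`. -/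
theorem stmt9 {C : Type u₁} [Category.{v₁} C] {D : Type u₂} [Category.{v₂} D]
    {E : Type u₃} [Category.{v₃} E] (F : C ⥤ D) [F.Final] (Φ Ψ : D ⥤ E)
    (hΨ : ∀ {d d' : D} (f : d ⟶ d'), IsIso (Ψ.map f)) :
    Function.Bijective fun η : Φ ⟶ Ψ => Functor.whiskerLeft F η := by
  haveI : ∀ {d d' : D} (f : d ⟶ d'), IsIso (Ψ.map f) := hΨ
  constructor
  · intro η₁ η₂ h
    ext d
    have hk := fun (η : Φ ⟶ Ψ) => η.naturality (Functor.Final.homToLift F d)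
    have h1 := congrArg (fun ε : F ⋙ Φ ⟶ F ⋙ Ψ => ε.app (Functor.Final.lift F d)) h
    simp only [Functor.whiskerLeft_app] at h1
    have : η₁.app d ≫ Ψ.map (Functor.Final.homToLift F d)
        = η₂.app d ≫ Ψ.map (Functor.Final.homToLift F d) := by
      rw [← hk η₁, ← hk η₂, h1]
    exact (cancel_mono (Ψ.map (Functor.Final.homToLift F d))).1 this
  · intro η'
    -- the candidate value at `d`
    let φ : ∀ d : D, Φ.obj d ⟶ Ψ.obj d := fun d =>
      Φ.map (Functor.Final.homToLift F d) ≫ η'.app (Functor.Final.lift F d) ≫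
        inv (Ψ.map (Functor.Final.homToLift F d))
    -- independence of the choice
    have key : ∀ (d : D) (X : C) (k : d ⟶ F.obj X),
        φ d = Φ.map k ≫ η'.app X ≫ inv (Ψ.map k) := by
      intro d X k
      have step : ∀ (X₁ X₂ : C) (k₁ : d ⟶ F.obj X₁) (f : X₁ ⟶ X₂),
          Φ.map k₁ ≫ η'.app X₁ ≫ inv (Ψ.map k₁)
            = Φ.map (k₁ ≫ F.map f) ≫ η'.app X₂ ≫ inv (Ψ.map (k₁ ≫ F.map f)) := by
        intro X₁ X₂ k₁ f
        have nat : Φ.map (F.map f) ≫ η'.app X₂ = η'.app X₁ ≫ Ψ.map (F.map f) := by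
          simpa using η'.naturality f
        rw [← cancel_mono (Ψ.map (k₁ ≫ F.map f))]
        simp [reassoc_of% nat]
      apply Functor.Final.induction F
        (fun Z g => (Φ.map g ≫ η'.app Z ≫ inv (Ψ.map g) : Φ.obj d ⟶ Ψ.obj d)
          = Φ.map k ≫ η'.app X ≫ inv (Ψ.map k)) (k₀ := k) (z := rfl)
      · intro X₁ X₂ k₁ k₂ f hf h
        subst hf
        rw [← step X₁ X₂ k₁ f]
        exact h
      · intro X₁ X₂ k₁ k₂ f hf h
        subst hf
        rw [step X₁ X₂ k₁ f]
        exact h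
    refine ⟨⟨φ, ?_⟩, ?_⟩
    · intro d d' g
      show Φ.map g ≫ φ d' = φ d ≫ Ψ.map g
      rw [key d (Functor.Final.lift F d') (g ≫ Functor.Final.homToLift F d')]
      show Φ.map g ≫ Φ.map (Functor.Final.homToLift F d') ≫
          η'.app (Functor.Final.lift F d') ≫ inv (Ψ.map (Functor.Final.homToLift F d')) = _
      simp
    · ext c
      simp only [Functor.whiskerLeft_app]
      have := key (F.obj c) c (𝟙 (F.obj c))
      show φ (F.obj c) = _
      simpa using this
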